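/- arXiv:1009.3777 — 5 statements merged into one kernel-verified Lean document; each statement's English description precedes it below -/
import Mathlib

section
/- Let f : ℚ/ℤ → ℕ be a function whose support is contained in ((1/e)ℤ)/ℤ. If there exists a polynomial Q(t) ∈ ℤ[t] that is a product of F-tame cyclotomic polynomials (i.e. of cyclotomic polynomials Φ_d(t) with d prime to the characteristic exponent of F) such that P_{f,ζ}(t) = ρ(Q(t)), then f is complete. -/
open Polynomial

lemma count_eq_sum_indicator_aux (s : Multiset ℕ) (o : ℕ) :
    (s.map fun d => if o = d then 1 else 0).sum = s.count o := by
  induction s using Multiset.induction with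
  | empty => simp
  | cons a t ih =>
    simp only [Multiset.map_cons, Multiset.sum_cons, ih, Multiset.count_cons]
    rcases eq_or_ne o a with h | h
    · simp [h, Nat.add_comm]
    · simp [h, Ne.symm h]

/-- Let `f : ℚ/ℤ → ℕ` be supported on `((1/e)ℤ)/ℤ` (the `e`-torsion of `ℚ/ℤ`), let `F` be
an algebraically closed field whose characteristic exponent is prime to `e`, and let
`ζ ∈ F` be a primitive `e`-th root of unity. If there is a polynomial `Q ∈ ℤ[t]` that is
a product of `F`-tame cyclotomic polynomials (cyclotomic polynomials `Φ_d` with `d` prime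
to the characteristic exponent of `F`) such that
`P_{f,ζ}(t) = ∏_{a < e} (t - ζ^a)^{f(a/e)} = ρ(Q)`, where `ρ : ℤ[t] → F[t]` is the
canonical ring morphism, then `f` is complete: `f x` depends only on the order of `x` in
`ℚ/ℤ`. -/
theorem complete_of_prod_eq_map_tame_cyclotomic
    (F : Type*) [Field F] [IsAlgClosed F]
    (e : ℕ) (he : 0 < e) (heF : (e : F) ≠ 0)
    (f : AddCircle (1 : ℚ) → ℕ)
    (hsupp : ∀ x : AddCircle (1 : ℚ), f x ≠ 0 → (e : ℤ) • x = 0)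
    (ζ : F) (hζ : IsPrimitiveRoot ζ e)
    (Q : Polynomial ℤ) (s : Multiset ℕ)
    (hs : ∀ d ∈ s, 0 < d ∧ (d : F) ≠ 0)
    (hQ : Q = (s.map fun d => cyclotomic d ℤ).prod)
    (hPQ : ∏ a ∈ Finset.range e,
        (X - C (ζ ^ a)) ^ f (((a : ℚ) / (e : ℚ) : ℚ) : AddCircle (1 : ℚ)) =
      Polynomial.map (Int.castRingHom F) Q) :
    ∀ x y : AddCircle (1 : ℚ), addOrderOf x = addOrderOf y → f x = f y := by
  classical
  -- roots of the right-hand side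
  have hmapQ : Polynomial.map (Int.castRingHom F) Q
      = (s.map fun d => cyclotomic d F).prod := by
    rw [hQ, Polynomial.map_multiset_prod, Multiset.map_map]
    exact congrArg _ (Multiset.map_congr rfl fun d _ => map_cyclotomic d (Int.castRingHom F))
  have hrootsR : (Polynomial.map (Int.castRingHom F) Q).roots
      = s.bind fun d => (cyclotomic d F).roots := by
    rw [hmapQ, Polynomial.roots_multiset_prod, Multiset.bind_map]
    intro h0
    obtain ⟨d, _, hd⟩ := Multiset.mem_map.1 h0
    exact cyclotomic_ne_zero d F hd
  have hne : (∏ a ∈ Finset.range e,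
      (X - C (ζ ^ a)) ^ f (((a : ℚ) / (e : ℚ) : ℚ) : AddCircle (1 : ℚ))) ≠ 0 :=
    Finset.prod_ne_zero_iff.mpr fun a _ => pow_ne_zero _ (X_sub_C_ne_zero _)
  -- the key counting identity
  have key : ∀ b < e, f (((b : ℚ) / (e : ℚ) : ℚ) : AddCircle (1 : ℚ))
      = s.count (orderOf (ζ ^ b)) := by
    intro b hb
    have hcount := congrArg (fun P : Polynomial F => P.roots.count (ζ ^ b)) hPQ
    rw [Polynomial.roots_prod _ _ hne, hrootsR] at hcount
    -- left-hand side count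
    have hL : (((Finset.range e).val.bind fun a =>
        ((X - C (ζ ^ a)) ^ f (((a : ℚ) / (e : ℚ) : ℚ) : AddCircle (1 : ℚ))).roots)).count (ζ ^ b)
        = f (((b : ℚ) / (e : ℚ) : ℚ) : AddCircle (1 : ℚ)) := by
      rw [Multiset.count_bind]
      have hcong : ∀ a ∈ (Finset.range e).val,
          (((X - C (ζ ^ a)) ^ f (((a : ℚ) / (e : ℚ) : ℚ) : AddCircle (1 : ℚ))).roots).count (ζ ^ b)
          = if a = b then f (((b : ℚ) / (e : ℚ) : ℚ) : AddCircle (1 : ℚ)) else 0 := by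
        intro a ha
        rw [Polynomial.roots_pow, Polynomial.roots_X_sub_C, Multiset.count_nsmul,
          Multiset.count_singleton]
        rcases eq_or_ne a b with h | h
        · simp [h]
        · have hab : ζ ^ b ≠ ζ ^ a := fun hcon =>
            h (hζ.pow_inj (Finset.mem_range.1 ha) hb hcon.symm)
          simp [h, hab]
      rw [Multiset.map_congr rfl hcong]
      have : ((Finset.range e).val.map fun a =>
          if a = b then f (((b : ℚ) / (e : ℚ) : ℚ) : AddCircle (1 : ℚ)) else 0).sum
          = ∑ a ∈ Finset.range e,
            if a = b then f (((b : ℚ) / (e : ℚ) : ℚ) : AddCircle (1 : ℚ)) else 0 := rfl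
      rw [this, Finset.sum_ite_eq' (Finset.range e) b, if_pos (Finset.mem_range.2 hb)]
    -- right-hand side count
    have hR : ((s.bind fun d => (cyclotomic d F).roots)).count (ζ ^ b)
        = s.count (orderOf (ζ ^ b)) := by
      rw [Multiset.count_bind]
      have hcong : ∀ d ∈ s, ((cyclotomic d F).roots).count (ζ ^ b)
          = if orderOf (ζ ^ b) = d then 1 else 0 := by
        intro d hd
        obtain ⟨hd1, hd2⟩ := hs d hd
        haveI : NeZero ((d : F)) := ⟨hd2⟩
        obtain ⟨ξ, hξ⟩ := HasEnoughRootsOfUnity.exists_primitiveRoot F d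
        rw [cyclotomic_eq_prod_X_sub_primitiveRoots hξ, Polynomial.roots_prod_X_sub_C]
        by_cases hmem : ζ ^ b ∈ primitiveRoots d F
        · have := ((mem_primitiveRoots hd1).1 hmem).eq_orderOf
          rw [Multiset.count_eq_one_of_mem (primitiveRoots d F).nodup hmem, if_pos this.symm]
        · rw [Multiset.count_eq_zero_of_notMem hmem, if_neg]
          intro hcon
          exact hmem ((mem_primitiveRoots hd1).2 (hcon ▸ IsPrimitiveRoot.orderOf (ζ ^ b)))
      rw [Multiset.map_congr rfl hcong, count_eq_sum_indicator_aux]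
    rw [hL, hR] at hcount
    exact hcount
  -- consequence: for `z` of exact order `n` with `n ∣ e`, `f z = s.count n`
  have main : ∀ n : ℕ, 0 < n → n ∣ e → ∀ z : AddCircle (1 : ℚ),
      addOrderOf z = n → f z = s.count n := by
    intro n hn hdvd z hz
    obtain ⟨m, hm, hcop, rfl⟩ := (AddCircle.addOrderOf_eq_pos_iff hn).1 hz
    obtain ⟨c, hc⟩ := hdvd
    have hc0 : 0 < c := by
      rcases Nat.eq_zero_or_pos c with h | h
      · exact absurd (hc.trans (by rw [h, mul_zero])) he.ne'
      · exact h
    have hb : m * c < e := by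
      calc m * c < n * c := (Nat.mul_lt_mul_right hc0).2 hm
      _ = e := hc.symm
    have hzeq : ((((m : ℚ) / (n : ℚ)) * (1 : ℚ) : ℚ) : AddCircle (1 : ℚ))
        = ((((m * c : ℕ) : ℚ) / (e : ℚ) : ℚ) : AddCircle (1 : ℚ)) := by
      congr 1
      have hn0 : (n : ℚ) ≠ 0 := Nat.cast_ne_zero.2 hn.ne'
      have hc0' : (c : ℚ) ≠ 0 := Nat.cast_ne_zero.2 hc0.ne'
      rw [hc]
      push_cast
      field_simp
    have hord : orderOf (ζ ^ (m * c)) = n := by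
      have hprim : IsPrimitiveRoot (ζ ^ c) n := hζ.pow he (by rw [hc, mul_comm])
      have : IsPrimitiveRoot (ζ ^ (m * c)) n := by
        rw [mul_comm, pow_mul]
        exact hprim.pow_of_coprime m hcop
      exact this.eq_orderOf.symm
    rw [hzeq, key (m * c) hb, hord]
  -- finish
  intro x y hxy
  by_cases hdvd : addOrderOf x ∣ e
  · have hn : 0 < addOrderOf x := by
      rcases Nat.eq_zero_or_pos (addOrderOf x) with h | h
      · rw [h] at hdvd
        exact absurd (Nat.eq_zero_of_zero_dvd hdvd) he.ne'
      · exact h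
    rw [main _ hn hdvd x rfl, main _ hn hdvd y hxy.symm]
  · have hx : f x = 0 := by
      by_contra h
      have := hsupp x h
      rw [natCast_zsmul] at this
      exact hdvd (addOrderOf_dvd_iff_nsmul_eq_zero.2 this)
    have hy : f y = 0 := by
      by_contra h
      have := hsupp y h
      rw [natCast_zsmul] at this
      exact hdvd (hxy ▸ addOrderOf_dvd_iff_nsmul_eq_zero.2 this)
    rw [hx, hy]
end

section
/- Let F be an algebraically closed field of characteristic zero, V a finite-dimensional F-vector space, M an endomorphism of V, and d > 0 an integer such that M^d is unipotent. Set W = ker(M^d − id). Assume that (M^d − id)(V) ⊆ W, and that there exist an M-stable subspace W′ ⊆ W and an isomorphism φ : (V/W)^∨ → W′ satisfying φ ∘ (M̄)^∨ = (M|_{W′}) ∘ φ, where M̄ is the endomorphism induced by M on V/W and (M̄)^∨ its dual. Then (M^d − id)² = 0, and for every α ∈ F: (i) dim ker((M − α·id)²) − dim ker(M − α·id) = dim ker((M − α·id)|_{W′}), i.e. the number of Jordan blocks of M of size two with eigenvalue α equals the multiplicity of α as an eigenvalue of M on W′; and (ii) 2·dim ker(M − α·id) − dim ker((M − α·id)²)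 = dim ker(M̃ − α·id), where M̃ is the endomorphism induced by M on W/W′, i.e. the number of Jordan blocks of M of size one with eigenvalue α equals the multiplicity of α as an eigenvalue of M on W/W′. -/
open Polynomial Module LinearMap Submodule

section Aux

variable {F : Type*} [Field F] {U : Type*} [AddCommGroup U] [Module F U]

private lemma aux_aeval_mul_apply (M : U →ₗ[F] U) (p q : F[X]) (x : U) :
    (aeval M (p * q)) x = (aeval M p) ((aeval M q) x) := by
  rw [map_mul]; rfl

private lemma aux_stab (M : U →ₗ[F] U) (T : Submodule F U) (h : ∀ x ∈ T, M x ∈ T)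
    (p : F[X]) : ∀ x ∈ T, (aeval M p) x ∈ T := by
  induction p using Polynomial.induction_on with
  | C a =>
      intro x hx
      simpa [Module.algebraMap_end_eq_smul_id] using T.smul_mem a hx
  | add p q hp hq =>
      intro x hx
      rw [map_add, LinearMap.add_apply]
      exact T.add_mem (hp x hx) (hq x hx)
  | monomial n a ih =>
      intro x hx
      have hrw : (C a * X ^ (n + 1) : F[X]) = (C a * X ^ n) * X := by ring
      rw [hrw, aux_aeval_mul_apply, aeval_X]
      exact ih (M x) (h x hx)

private lemma aux_coprime {α : F} {p : F[X]} (h : p.eval α ≠ 0) :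
    IsCoprime (X - C α) p := by
  obtain ⟨q, hq⟩ := X_sub_C_dvd_sub_C_eval (a := α) (p := p)
  refine ⟨-(C (p.eval α)⁻¹ * q), C (p.eval α)⁻¹, ?_⟩
  have hc : C (p.eval α)⁻¹ * C (p.eval α) = (1 : F[X]) := by
    rw [← C_mul, inv_mul_cancel₀ h, C_1]
  linear_combination C (p.eval α)⁻¹ * hq + hc

end Aux
open Polynomial Module LinearMap Submodule

section Aux2

variable {F : Type*} [Field F] {U : Type*} [AddCommGroup U] [Module F U]

private lemma aux_map_subtype_finrank (S : Submodule F U) (R : Submodule F ↥S) :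
    Module.finrank F (Submodule.map S.subtype R) = Module.finrank F R :=
  ((Submodule.equivMapOfInjective S.subtype (Submodule.injective_subtype S) R).finrank_eq).symm

private lemma aux_comap_subtype_finrank (S T : Submodule F U) :
    Module.finrank F (Submodule.comap S.subtype T) = Module.finrank F ↥(T ⊓ S) := by
  have h : Submodule.comap S.subtype T = Submodule.comap S.subtype (T ⊓ S) := by
    ext x
    simp [Submodule.mem_comap, x.2]
  rw [h]
  exact (Submodule.comapSubtypeEquivOfLe inf_le_right).finrank_eq

private lemma aux_quot [FiniteDimensional F U] (f : U →ₗ[F] U) (T : Submodule F U)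
    (h : T ≤ T.comap f) (α : F) :
    Module.finrank F (LinearMap.ker (T.mapQ T f h - α • LinearMap.id)) + Module.finrank F T =
      Module.finrank F (Submodule.comap (f - α • LinearMap.id) T) := by
  set g : U →ₗ[F] U := f - α • LinearMap.id with hg
  set Q : (U ⧸ T) →ₗ[F] (U ⧸ T) := T.mapQ T f h - α • LinearMap.id with hQ
  have hstab : ∀ x ∈ T, g x ∈ T := by
    intro x hx
    rw [hg, LinearMap.sub_apply, LinearMap.smul_apply, LinearMap.id_apply]
    exact T.sub_mem (h hx) (T.smul_mem α hx)
  have hle : T ≤ Submodule.comap g T := fun x hx => Submodule.mem_comap.mpr (hstab x hx)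
  have hker : LinearMap.ker Q = Submodule.map T.mkQ (Submodule.comap g T) := by
    ext y
    obtain ⟨x, rfl⟩ := T.mkQ_surjective y
    have happ : Q (T.mkQ x) = T.mkQ (g x) := by
      rw [hQ, hg]
      simp only [LinearMap.sub_apply, LinearMap.smul_apply, LinearMap.id_apply, Submodule.mkQ_apply,
        Submodule.mapQ_apply, map_sub, map_smul]
    constructor
    · intro hy
      rw [LinearMap.mem_ker, happ, Submodule.mkQ_apply, Submodule.Quotient.mk_eq_zero] at hy
      exact ⟨x, Submodule.mem_comap.mpr hy, rfl⟩
    · rintro ⟨z, hz, hzx⟩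
      rw [LinearMap.mem_ker, happ, Submodule.mkQ_apply, Submodule.Quotient.mk_eq_zero]
      have hxz : x - z ∈ T := by
        rw [← Submodule.Quotient.eq]
        exact (hzx ▸ rfl : T.mkQ z = T.mkQ x).symm
      have h1 : g (x - z) ∈ T := hstab _ hxz
      have h2 : g z ∈ T := Submodule.mem_comap.mp hz
      have h3 : g x = g (x - z) + g z := by
        rw [← map_add]; congr 1; abel
      rw [h3]
      exact T.add_mem h1 h2
  rw [hker]
  set S := Submodule.comap g T with hS
  have h2 := LinearMap.finrank_range_add_finrank_ker (T.mkQ.comp S.subtype)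
  rw [LinearMap.range_comp, Submodule.range_subtype, LinearMap.ker_comp, Submodule.ker_mkQ] at h2
  have h3 : Module.finrank F (Submodule.comap S.subtype T) = Module.finrank F T := by
    rw [aux_comap_subtype_finrank, inf_eq_left.mpr hle]
  omega

private lemma aux_ker_dual [FiniteDimensional F U] (f : U →ₗ[F] U) :
    Module.finrank F (LinearMap.ker f.dualMap) = Module.finrank F (LinearMap.ker f) := by
  have h1 := LinearMap.finrank_range_add_finrank_ker f.dualMap
  have h2 := LinearMap.finrank_range_add_finrank_ker f
  have h3 := LinearMap.finrank_range_dualMap_eq_finrank_range f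
  have h4 : Module.finrank F (Module.Dual F U) = Module.finrank F U := Subspace.dual_finrank_eq
  omega

private lemma aux_dualMap_sub_smul (f : U →ₗ[F] U) (α : F) :
    ((f - α • LinearMap.id : U →ₗ[F] U)).dualMap
      = (f.dualMap - α • LinearMap.id : Module.Dual F U →ₗ[F] Module.Dual F U) := by
  refine LinearMap.ext fun g => LinearMap.ext fun x => ?_
  simp [LinearMap.dualMap_apply, LinearMap.sub_apply, LinearMap.smul_apply, LinearMap.id_apply,
    map_sub, map_smul]

private lemma aux_ker_conj {A B : Type*} [AddCommGroup A] [Module F A] [AddCommGroup B] [Module F B]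
    (e : A ≃ₗ[F] B) (f : A →ₗ[F] A) (g : B →ₗ[F] B)
    (hcomm : ∀ x, e (f x) = g (e x)) :
    Module.finrank F (LinearMap.ker g) = Module.finrank F (LinearMap.ker f) := by
  have hker : LinearMap.ker g = Submodule.map (e : A →ₗ[F] B) (LinearMap.ker f) := by
    ext y
    simp only [LinearMap.mem_ker, Submodule.mem_map, LinearEquiv.coe_coe]
    constructor
    · intro hy
      refine ⟨e.symm y, ?_, e.apply_symm_apply y⟩
      apply e.injective
      rw [map_zero, hcomm, e.apply_symm_apply, hy]
    · rintro ⟨x, hx, rfl⟩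
      rw [← hcomm, hx, map_zero]
  rw [hker, LinearEquiv.finrank_map_eq]

end Aux2

set_option maxHeartbeats 2000000 in
/-- Let `M` be an endomorphism of a finite dimensional vector space `V` over an
algebraically closed field of characteristic zero, and `d > 0` an integer with `M ^ d`
unipotent. Let `W = ker (M ^ d - id)`, assume `M ^ d` acts trivially on `V / W` (i.e.
`im (M ^ d - id) ⊆ W`), and assume there is an `M`-equivariant isomorphism `φ` between
`(V / W)^∨` and an `M`-stable subspace `W'` of `W`. Then `(M ^ d - id) ^ 2 = 0` and, for
every `α`, the number of Jordan blocks of `M` of size two with eigenvalue `α` equals the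
multiplicity of `α` as an eigenvalue of `M` on `W'`, and the number of Jordan blocks of
size one with eigenvalue `α` equals the multiplicity of `α` as an eigenvalue of `M` on
`W / W'`. -/
theorem jordan_blocks_of_essentially_unipotent
    (F V : Type*) [Field F] [IsAlgClosed F] [CharZero F]
    [AddCommGroup V] [Module F V] [FiniteDimensional F V]
    (M : V →ₗ[F] V) (d : ℕ) (hd : 0 < d)
    (hunip : IsNilpotent (M ^ d - LinearMap.id))
    (W : Submodule F V) (hW : W = LinearMap.ker (M ^ d - LinearMap.id))
    (htriv : LinearMap.range (M ^ d - LinearMap.id) ≤ W)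
    (W' : Submodule F V) (hW'W : W' ≤ W)
    (hMW : ∀ x ∈ W, M x ∈ W) (hMW' : ∀ x ∈ W', M x ∈ W')
    (φ : Module.Dual F (V ⧸ W) ≃ₗ[F] W')
    (hφ : ∀ g : Module.Dual F (V ⧸ W),
      φ ((Submodule.mapQ W W M (fun x hx => hMW x hx)).dualMap g) =
        M.restrict hMW' (φ g)) :
    (M ^ d - LinearMap.id) ^ 2 = 0 ∧
      ∀ α : F,
        (Module.finrank F (LinearMap.ker ((M - α • LinearMap.id) ^ 2)) -
            Module.finrank F (LinearMap.ker (M - α • LinearMap.id)) =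
          Module.finrank F
            (LinearMap.ker (M.restrict hMW' - α • LinearMap.id))) ∧
        (2 * Module.finrank F (LinearMap.ker (M - α • LinearMap.id)) -
            Module.finrank F (LinearMap.ker ((M - α • LinearMap.id) ^ 2)) =
          Module.finrank F
            (LinearMap.ker
              (Submodule.mapQ (W'.comap W.subtype) (W'.comap W.subtype)
                  (M.restrict hMW) (fun x hx => hMW' x.1 hx) -
                α • LinearMap.id))) := by
  classical
  have hWmem : ∀ x : V, x ∈ W ↔ (M ^ d - LinearMap.id : V →ₗ[F] V) x = 0 := by
    intro x; rw [hW, LinearMap.mem_ker]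
  have hP2 : (M ^ d - LinearMap.id) ^ 2 = 0 := by
    apply LinearMap.ext
    intro x
    have h1 : (M ^ d - LinearMap.id : V →ₗ[F] V) ((M ^ d - LinearMap.id : V →ₗ[F] V) x) = 0 :=
      (hWmem _).mp (htriv ⟨x, rfl⟩)
    rw [pow_two, Module.End.mul_apply, LinearMap.zero_apply]
    exact h1
  refine ⟨hP2, fun α => ?_⟩
  set P : V →ₗ[F] V := M ^ d - LinearMap.id with hPdef
  set N : V →ₗ[F] V := M - α • LinearMap.id with hNdef
  have hNapp : ∀ x : V, N x = M x - α • x := by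
    intro x; rw [hNdef, LinearMap.sub_apply, LinearMap.smul_apply, LinearMap.id_apply]
  have hNa : (aeval M (X - C α) : V →ₗ[F] V) = N := by
    rw [map_sub, aeval_X, aeval_C, Module.algebraMap_end_eq_smul_id, hNdef]
  have hPa : (aeval M ((X : F[X]) ^ d - 1) : V →ₗ[F] V) = P := by
    rw [map_sub, map_pow, aeval_X, map_one, hPdef, Module.End.one_eq_id]
  -- eigenvectors lie in W
  have hkerNW : ∀ x : V, N x = 0 → x ∈ W := by
    intro x hx
    have hMx : M x = α • x := by
      have h0 := hNapp x
      rw [hx] at h0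
      exact (sub_eq_zero.mp h0.symm)
    have hpow : ∀ n : ℕ, (M ^ n) x = α ^ n • x := by
      intro n; induction n with
      | zero => simp
      | succ n ih =>
          rw [pow_succ, Module.End.mul_apply, hMx, map_smul, ih, smul_smul, pow_succ]
          ring_nf
    have hPx : P x = (α ^ d - 1) • x := by
      rw [hPdef, LinearMap.sub_apply, LinearMap.id_apply, hpow, sub_smul, one_smul]
    have h2 : ((α ^ d - 1) ^ 2) • x = 0 := by
      have h3 : (P ^ 2) x = 0 := by rw [hP2]; rfl
      rw [pow_two, Module.End.mul_apply, hPx, map_smul, hPx, smul_smul, ← pow_two] at h3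
      exact h3
    rw [hWmem, hPx]
    rcases smul_eq_zero.mp h2 with h | h
    · rw [sq_eq_zero_iff.mp h, zero_smul]
    · rw [h, smul_zero]
  -- Bezout data
  obtain ⟨a, b, h, c, hbez, hch⟩ :
      ∃ a b h c : F[X], a * (X - C α) + b * h = 1 ∧
        (X - C α) * h = ((X : F[X]) ^ d - 1) * c := by
    by_cases hα : α ^ d = 1
    · have hdvd : (X - C α) ∣ ((X : F[X]) ^ d - 1) :=
        dvd_iff_isRoot.mpr (by simp [Polynomial.IsRoot, hα])
      obtain ⟨h, hh⟩ := hdvd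
      have e1 : (derivative ((X : F[X]) ^ d - 1)).eval α = (d : F) * α ^ (d - 1) := by
        rw [derivative_sub, derivative_one, derivative_X_pow, sub_zero]
        simp
      have e2 : (derivative ((X : F[X]) ^ d - 1)).eval α = h.eval α := by
        rw [hh, derivative_mul]
        simp
      have hα0 : α ≠ 0 := by
        intro h0
        rw [h0, zero_pow hd.ne'] at hα
        exact zero_ne_one hα
      have hne : h.eval α ≠ 0 := by
        rw [← e2, e1]
        exact mul_ne_zero (Nat.cast_ne_zero.mpr hd.ne') (pow_ne_zero _ hα0)
      obtain ⟨u, v, huv⟩ := aux_coprime hne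
      exact ⟨u, v, h, 1, huv, by rw [mul_one]; exact hh.symm⟩
    · have hne : (((X : F[X]) ^ d - 1)).eval α ≠ 0 := by
        simpa using sub_ne_zero.mpr hα
      obtain ⟨u, v, huv⟩ := aux_coprime hne
      exact ⟨u, v, _, X - C α, huv, mul_comm _ _⟩
  have hstabW : ∀ (p : F[X]) (x : V), x ∈ W → (aeval M p) x ∈ W :=
    fun p x hx => aux_stab M W hMW p x hx
  have hstabW' : ∀ (p : F[X]) (x : V), x ∈ W' → (aeval M p) x ∈ W' :=
    fun p x hx => aux_stab M W' hMW' p x hx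
  have hsub : ∀ x : V, (N ^ 2) x = N (N x) := by
    intro x; rw [pow_two, Module.End.mul_apply]
  have hD1 : ∀ x ∈ W, N (N x) = 0 → N x = 0 := by
    intro x hxW hx2
    have pid1 : (X - C α : F[X]) = a * (X - C α) ^ 2 + (b * c) * ((X : F[X]) ^ d - 1) := by
      linear_combination (-(X - C α : F[X])) * hbez + b * hch
    have e0 : N x = (aeval M a) (N (N x)) + (aeval M (b * c)) (P x) := by
      conv_lhs => rw [← hNa, pid1]
      rw [map_add, LinearMap.add_apply]
      congr 1
      · rw [aux_aeval_mul_apply, map_pow, hNa, hsub]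
      · rw [aux_aeval_mul_apply, hPa]
    rw [hx2, (hWmem x).mp hxW, map_zero, map_zero, add_zero] at e0
    exact e0
  have hS1 : W ⊓ LinearMap.ker (N ^ 2) = LinearMap.ker N := by
    apply le_antisymm
    · intro x hx
      obtain ⟨hxW, hx2⟩ := Submodule.mem_inf.mp hx
      have hx2' : N (N x) = 0 := by rw [← hsub]; exact LinearMap.mem_ker.mp hx2
      exact LinearMap.mem_ker.mpr (hD1 x hxW hx2')
    · intro x hx
      have hx0 : N x = 0 := LinearMap.mem_ker.mp hx
      exact Submodule.mem_inf.mpr ⟨hkerNW x hx0,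
        LinearMap.mem_ker.mpr (by rw [hsub, hx0, map_zero])⟩
  have hS2 : Submodule.comap N W = W ⊔ LinearMap.ker (N ^ 2) := by
    apply le_antisymm
    · intro x hx
      have hNxW : N x ∈ W := Submodule.mem_comap.mp hx
      have hx1 : (aeval M (a * (X - C α) + b * h)) x = x := by
        rw [hbez, map_one, Module.End.one_apply]
      rw [map_add, LinearMap.add_apply, aux_aeval_mul_apply, hNa] at hx1
      rw [← hx1]
      apply Submodule.add_mem_sup
      · exact hstabW a _ hNxW
      · rw [LinearMap.mem_ker, hsub]
        have pid2 : ((X - C α) ^ 2 * (b * h) : F[X])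
            = (b * c) * (((X : F[X]) ^ d - 1) * (X - C α)) := by
          linear_combination (b * (X - C α) : F[X]) * hch
        have e5 : N (N ((aeval M (b * h)) x)) = (aeval M ((X - C α) ^ 2 * (b * h))) x := by
          conv_rhs => rw [aux_aeval_mul_apply, map_pow, hNa]
          rw [hsub]
        rw [e5, pid2]
        simp only [aux_aeval_mul_apply]
        rw [hNa, hPa, (hWmem _).mp hNxW, map_zero, map_zero]
    · apply sup_le
      · intro x hxW
        rw [Submodule.mem_comap, hNapp]
        exact W.sub_mem (hMW x hxW) (W.smul_mem α hxW)
      · intro x hx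
        rw [Submodule.mem_comap]
        have hx0 : N (N x) = 0 := by rw [← hsub]; exact LinearMap.mem_ker.mp hx
        exact hkerNW (N x) hx0
  have hS3 : Module.finrank F (Submodule.comap N W) + Module.finrank F (LinearMap.ker N) =
      Module.finrank F W + Module.finrank F (LinearMap.ker (N ^ 2)) := by
    rw [hS2, ← hS1]
    exact Submodule.finrank_sup_add_finrank_inf_eq W (LinearMap.ker (N ^ 2))
  have hm1 := aux_quot (F := F) M W (fun x hx => hMW x hx) α
  rw [← hNdef] at hm1
  have hdual : Module.finrank F (LinearMap.ker (M.restrict hMW' - α • LinearMap.id)) =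
      Module.finrank F (LinearMap.ker
        (Submodule.mapQ W W M (fun x hx => hMW x hx) - α • LinearMap.id)) := by
    have h1 : Module.finrank F (LinearMap.ker (M.restrict hMW' - α • LinearMap.id)) =
        Module.finrank F (LinearMap.ker
          ((Submodule.mapQ W W M (fun x hx => hMW x hx)).dualMap - α • LinearMap.id)) := by
      apply aux_ker_conj φ
      intro x
      rw [LinearMap.sub_apply, map_sub, LinearMap.smul_apply, map_smul, LinearMap.id_apply,
        hφ x, LinearMap.sub_apply, LinearMap.smul_apply, LinearMap.id_apply]
    rw [h1, ← aux_dualMap_sub_smul, aux_ker_dual]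
  have hkey1 : Module.finrank F (LinearMap.ker (M.restrict hMW' - α • LinearMap.id)) +
      Module.finrank F (LinearMap.ker N) = Module.finrank F (LinearMap.ker (N ^ 2)) := by
    rw [hdual]
    omega
  refine ⟨by omega, ?_⟩
  have hNW' : ∀ x ∈ W', N x ∈ W' := by
    intro x hx
    rw [hNapp]
    exact W'.sub_mem (hMW' x hx) (W'.smul_mem α hx)
  have hD3 : ∀ y ∈ W', ∀ x ∈ W, N x = y → ∃ z ∈ W', N z = y := by
    intro y hy x hxW hNx
    refine ⟨(aeval M a) y, hstabW' a y hy, ?_⟩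
    have e1 : N ((aeval M a) y) = (aeval M ((X - C α) * a)) y := by
      rw [aux_aeval_mul_apply, hNa]
    have e2 : ((X - C α) * a : F[X]) = 1 - b * h := by linear_combination hbez
    have e3 : (aeval M h) y = 0 := by
      rw [← hNx, ← hNa, ← aux_aeval_mul_apply]
      have e4 : (h * (X - C α) : F[X]) = c * ((X : F[X]) ^ d - 1) := by linear_combination hch
      rw [e4, aux_aeval_mul_apply, hPa, (hWmem x).mp hxW, map_zero]
    rw [e1, e2, map_sub, map_one, LinearMap.sub_apply, Module.End.one_apply,
      aux_aeval_mul_apply, e3, map_zero, sub_zero]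
  have hNT' : ∀ x ∈ Submodule.comap N W' ⊓ W, N x ∈ W' :=
    fun x hx => Submodule.mem_comap.mp (Submodule.mem_inf.mp hx).1
  have hkerNT' : LinearMap.ker N ≤ Submodule.comap N W' ⊓ W := by
    intro x hx
    have hx0 : N x = 0 := LinearMap.mem_ker.mp hx
    refine Submodule.mem_inf.mpr ⟨Submodule.mem_comap.mpr ?_, hkerNW x hx0⟩
    rw [hx0]; exact W'.zero_mem
  have hW'T' : W' ≤ Submodule.comap N W' ⊓ W := fun x hx =>
    Submodule.mem_inf.mpr ⟨Submodule.mem_comap.mpr (hNW' x hx), hW'W hx⟩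
  have hkf1 : Module.finrank F (LinearMap.ker (N.restrict hNT'))
      = Module.finrank F (LinearMap.ker N) := by
    rw [LinearMap.ker_restrict, aux_comap_subtype_finrank, inf_eq_left.mpr hkerNT']
  have hrange : ∀ (S : Submodule F V) (hS : ∀ x ∈ S, N x ∈ W'),
      Submodule.map W'.subtype (LinearMap.range (N.restrict hS)) = Submodule.map N S := by
    intro S hS
    ext y
    simp only [Submodule.mem_map, LinearMap.mem_range]
    constructor
    · rintro ⟨y', ⟨x, rfl⟩, rfl⟩
      exact ⟨x.1, x.2, (LinearMap.restrict_coe_apply N hS x).symm⟩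
    · rintro ⟨x, hx, rfl⟩
      exact ⟨(N.restrict hS) ⟨x, hx⟩, ⟨⟨x, hx⟩, rfl⟩, LinearMap.restrict_coe_apply N hS ⟨x, hx⟩⟩
  have hrn1 := LinearMap.finrank_range_add_finrank_ker (N.restrict hNT')
  have hrn2 := LinearMap.finrank_range_add_finrank_ker (N.restrict hNW')
  have hr1 : Module.finrank F (LinearMap.range (N.restrict hNT'))
      = Module.finrank F (Submodule.map N (Submodule.comap N W' ⊓ W)) := by
    rw [← aux_map_subtype_finrank W' (LinearMap.range (N.restrict hNT')), hrange _ hNT']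
  have hr2 : Module.finrank F (LinearMap.range (N.restrict hNW'))
      = Module.finrank F (Submodule.map N W') := by
    rw [← aux_map_subtype_finrank W' (LinearMap.range (N.restrict hNW')), hrange _ hNW']
  have hmapT' : Submodule.map N (Submodule.comap N W' ⊓ W) = Submodule.map N W' := by
    apply le_antisymm
    · intro y hy
      rw [Submodule.mem_map] at hy
      obtain ⟨x, hx, rfl⟩ := hy
      obtain ⟨z, hz, hzy⟩ := hD3 (N x) (hNT' x hx) x (Submodule.mem_inf.mp hx).2 rfl
      exact Submodule.mem_map.mpr ⟨z, hz, hzy⟩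
    · exact Submodule.map_mono hW'T'
  have hkf2 : Module.finrank F (LinearMap.ker (N.restrict hNW')) =
      Module.finrank F (LinearMap.ker (M.restrict hMW' - α • LinearMap.id)) := by
    rw [LinearMap.ker_restrict]
    have hkr : LinearMap.ker (M.restrict hMW' - α • LinearMap.id)
        = Submodule.comap W'.subtype (LinearMap.ker N) := by
      ext x
      simp only [LinearMap.mem_ker, Submodule.mem_comap, Submodule.subtype_apply]
      have hval : (((M.restrict hMW' - α • LinearMap.id : ↥W' →ₗ[F] ↥W')) x).1 = N x.1 := by
        rw [LinearMap.sub_apply, LinearMap.smul_apply, LinearMap.id_apply, hNapp]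
        simp [LinearMap.restrict_coe_apply]
      rw [← Submodule.coe_eq_zero, hval]
    rw [hkr]
  have hm2 := aux_quot (F := F) (M.restrict hMW) (W'.comap W.subtype) (fun x hx => hMW' x.1 hx) α
  have hcomapeq : Submodule.comap (M.restrict hMW - α • LinearMap.id) (W'.comap W.subtype)
      = Submodule.comap W.subtype (Submodule.comap N W') := by
    ext x
    simp only [Submodule.mem_comap, Submodule.subtype_apply]
    have hval : (((M.restrict hMW - α • LinearMap.id : ↥W →ₗ[F] ↥W)) x).1 = N x.1 := by
      rw [LinearMap.sub_apply, LinearMap.smul_apply, LinearMap.id_apply, hNapp]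
      simp [LinearMap.restrict_coe_apply]
    rw [← hval]
  rw [hcomapeq, aux_comap_subtype_finrank, aux_comap_subtype_finrank,
    inf_eq_left.mpr hW'W] at hm2
  rw [hkf1, hr1, hmapT'] at hrn1
  rw [hkf2, hr2] at hrn2
  omega
end

section
/- Let F be a field of characteristic zero, V a finite-dimensional F-vector space, N a nilpotent endomorphism of V, and W the weight filtration centered at w ∈ ℤ associated to N. If N′ is another nilpotent endomorphism of V such that (N − N′)(W_i) ⊆ W_{i−3} for all i ∈ ℤ, then the weight filtration centered at w associated to N′ coincides with W. -/
/-- `W` is an ascending filtration on `V`, exhaustive and separated, which is the weight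
filtration centered at `w` associated to the nilpotent endomorphism `N`. -/
def IsWeightFiltration {F V : Type*} [Field F] [AddCommGroup V] [Module F V]
    (N : V →ₗ[F] V) (w : ℤ) (W : ℤ → Submodule F V) : Prop :=
  Monotone W ∧
  (∃ a : ℤ, ∀ i ≤ a, W i = ⊥) ∧
  (∃ b : ℤ, ∀ i, b ≤ i → W i = ⊤) ∧
  (∀ i : ℤ, (W i).map N ≤ W (i - 2)) ∧
  (∀ α : ℤ, 0 < α →
    W (w - α) ≤ W (w - α - 1) ⊔ (W (w + α)).map (N ^ α.toNat) ∧
    ∀ v ∈ W (w + α), (N ^ α.toNat) v ∈ W (w - α - 1) → v ∈ W (w + α - 1))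

/-- If `W` is the weight filtration centered at `w` associated to a nilpotent endomorphism
`N` of a finite dimensional vector space over a field of characteristic zero, and `N'` is
another nilpotent endomorphism with `(N - N') (W i) ⊆ W (i - 3)` for all `i`, then the
weight filtration centered at `w` associated to `N'` coincides with `W`. -/
theorem weightFiltration_eq_of_sub_shift
    (F V : Type*) [Field F] [CharZero F] [AddCommGroup V] [Module F V]
    [FiniteDimensional F V]
    (N : V →ₗ[F] V) (hN : IsNilpotent N) (w : ℤ) (W : ℤ → Submodule F V)
    (hW : IsWeightFiltration N w W)
    (N' : V →ₗ[F] V) (hN' : IsNilpotent N')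
    (hshift : ∀ i : ℤ, (W i).map (N - N') ≤ W (i - 3)) :
    IsWeightFiltration N' w W := by
  obtain ⟨hmono, ha, hb, hmap, hiso⟩ := hW
  -- N' also shifts by 2
  have hmap' : ∀ i : ℤ, (W i).map N' ≤ W (i - 2) := by
    intro i x hx
    obtain ⟨v, hv, rfl⟩ := hx
    have h1 : N v ∈ W (i - 2) := hmap i ⟨v, hv, rfl⟩
    have h2 : (N - N') v ∈ W (i - 3) := hshift i ⟨v, hv, rfl⟩
    have h3 : (N - N') v ∈ W (i - 2) := hmono (by omega) h2
    have : N' v = N v - (N - N') v := by simp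
    rw [this]
    exact sub_mem h1 h3
  -- N^k shifts by 2k
  have hpowN : ∀ (k : ℕ) (i : ℤ) (v : V), v ∈ W i → (N ^ k) v ∈ W (i - 2 * k) := by
    intro k
    induction k with
    | zero => intro i v hv; simpa using hv
    | succ k ih =>
      intro i v hv
      have h1 : N ((N ^ k) v) ∈ W (i - 2 * k - 2) := hmap _ ⟨_, ih i v hv, rfl⟩
      have heq : i - 2 * ((k : ℤ) + 1) = i - 2 * k - 2 := by ring
      rw [pow_succ', Module.End.mul_apply]
      push_cast
      rw [heq]
      exact h1
  -- N'^k v ≡ N^k v mod W (i - 2k - 1)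
  have hpow : ∀ (k : ℕ) (i : ℤ) (v : V), v ∈ W i →
      (N' ^ k) v - (N ^ k) v ∈ W (i - 2 * k - 1) := by
    intro k
    induction k with
    | zero => intro i v hv; simp
    | succ k ih =>
      intro i v hv
      have hr : (N' ^ k) v - (N ^ k) v ∈ W (i - 2 * k - 1) := ih i v hv
      have h1 : N' ((N' ^ k) v - (N ^ k) v) ∈ W (i - 2 * k - 3) := by
        have := hmap' (i - 2 * k - 1) ⟨_, hr, rfl⟩
        have heq : i - 2 * (k : ℤ) - 1 - 2 = i - 2 * k - 3 := by ring
        rwa [heq] at this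
      have h2 : (N - N') ((N ^ k) v) ∈ W (i - 2 * k - 3) := by
        have := hshift (i - 2 * k) ⟨_, hpowN k i v hv, rfl⟩
        have heq : i - 2 * (k : ℤ) - 3 = i - 2 * k - 3 := by ring
        rwa [heq] at this
      have key : (N' ^ (k + 1)) v - (N ^ (k + 1)) v =
          N' ((N' ^ k) v - (N ^ k) v) - (N - N') ((N ^ k) v) := by
        simp only [pow_succ', Module.End.mul_apply, map_sub, LinearMap.sub_apply]
        abel
      rw [key]
      have heq : i - 2 * ((k : ℤ) + 1) - 1 = i - 2 * k - 3 := by ring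
      push_cast
      rw [heq]
      exact sub_mem h1 h2
  refine ⟨hmono, ha, hb, hmap', ?_⟩
  intro α hα
  obtain ⟨hsurj, hinj⟩ := hiso α hα
  have hcast : 2 * (α.toNat : ℤ) = 2 * α := by omega
  constructor
  · intro x hx
    have := hsurj hx
    rw [Submodule.mem_sup] at this ⊢
    obtain ⟨y, hy, z, hz, rfl⟩ := this
    obtain ⟨v, hv, rfl⟩ := hz
    have hd : (N' ^ α.toNat) v - (N ^ α.toNat) v ∈ W (w - α - 1) := by
      have := hpow α.toNat (w + α) v hv
      have heq : w + α - 2 * (α.toNat : ℤ) - 1 = w - α - 1 := by omega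
      rwa [heq] at this
    refine ⟨y - ((N' ^ α.toNat) v - (N ^ α.toNat) v), sub_mem hy hd,
      (N' ^ α.toNat) v, ⟨v, hv, rfl⟩, by abel⟩
  · intro v hv hNv
    apply hinj v hv
    have hd : (N' ^ α.toNat) v - (N ^ α.toNat) v ∈ W (w - α - 1) := by
      have := hpow α.toNat (w + α) v hv
      have heq : w + α - 2 * (α.toNat : ℤ) - 1 = w - α - 1 := by omega
      rwa [heq] at this
    have : (N ^ α.toNat) v = (N' ^ α.toNat) v - ((N' ^ α.toNat) v - (N ^ α.toNat) v) := by
      abel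
    rw [this]
    exact sub_mem hNv hd
end

section
/- Let F be a field of characteristic zero, V a finite-dimensional F-vector space, N a nilpotent endomorphism of V, and W the weight filtration centered at w ∈ ℤ associated to N. If S is an automorphism of V commuting with N, then N ∘ S is nilpotent and the weight filtration centered at w associated to N ∘ S coincides with W; moreover S(W_i) = W_i for all i ∈ ℤ. -/
section Aux

variable {F V : Type*} [Field F] [AddCommGroup V] [Module F V]

/-- Iterated version of the condition `N (W i) ⊆ W (i-2)`. -/
lemma wf_pow_mem {N : V →ₗ[F] V} {W : ℤ → Submodule F V}
    (hmap : ∀ i : ℤ, (W i).map N ≤ W (i - 2)) :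
    ∀ (j : ℕ) (i : ℤ) (v : V), v ∈ W i → (N ^ j) v ∈ W (i - 2 * j) := by
  intro j
  induction j with
  | zero => intro i v hv; simpa using hv
  | succ j ih =>
    intro i v hv
    have h1 : N v ∈ W (i - 2) := hmap i ⟨v, hv, rfl⟩
    have h2 := ih (i - 2) (N v) h1
    have hpow : (N ^ (j + 1)) v = (N ^ j) (N v) := by
      rw [pow_succ, Module.End.mul_apply]
    rw [hpow]
    have he : i - 2 - 2 * (j : ℤ) = i - 2 * ((j : ℕ) + 1 : ℕ) := by push_cast; ring
    rwa [he] at h2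

/-- Characterization of the upper part of the weight filtration as a preimage. -/
lemma wf_comap_char {N : V →ₗ[F] V} {w : ℤ} {W : ℤ → Submodule F V}
    (hW : IsWeightFiltration N w W) (k : ℕ) (v : V) :
    v ∈ W (w + k) ↔ (N ^ (k + 1)) v ∈ W (w - k - 2) := by
  obtain ⟨hmono, -, ⟨b, hb⟩, hmap, hiso⟩ := hW
  constructor
  · intro hv
    have h := wf_pow_mem hmap (k + 1) (w + k) v hv
    have he : w + k - 2 * ((k : ℕ) + 1 : ℕ) = w - k - 2 := by push_cast; ring
    rwa [he] at h
  · intro hNv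
    have key : ∀ d : ℕ, v ∈ W (w + k + d) → v ∈ W (w + k) := by
      intro d
      induction d with
      | zero => intro h; simpa using h
      | succ d ih =>
        intro h
        apply ih
        set α : ℤ := (k : ℤ) + d + 1 with hα
        have hpos : (0 : ℤ) < α := by positivity
        have htn : α.toNat = k + d + 1 := by omega
        have hNv2 : (N ^ (k + d + 1)) v ∈ W (w - k - 2 - 2 * d) := by
          have hpow : (N ^ (k + d + 1)) v = (N ^ d) ((N ^ (k + 1)) v) := by
            rw [show k + d + 1 = d + (k + 1) by ring, pow_add, Module.End.mul_apply]
          rw [hpow]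
          exact wf_pow_mem hmap d _ _ hNv
        have hmem : v ∈ W (w + α) := by
          have : w + k + ((d : ℕ) + 1 : ℕ) = w + α := by push_cast [hα]; ring
          rwa [this] at h
        have hNmem : (N ^ α.toNat) v ∈ W (w - α - 1) := by
          rw [htn]
          exact hmono (by omega) hNv2
        have h2 := (hiso α hpos).2 v hmem hNmem
        have : w + α - 1 = w + k + d := by push_cast [hα]; ring
        rwa [this] at h2
    apply key (b - (w + k)).toNat
    rw [hb _ (by omega)]
    trivial

/-- Uniqueness of the weight filtration. -/
lemma wf_unique {N : V →ₗ[F] V} {w : ℤ} {W W' : ℤ → Submodule F V}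
    (hW : IsWeightFiltration N w W) (hW' : IsWeightFiltration N w W') :
    ∀ i : ℤ, W i = W' i := by
  obtain ⟨hmono, ⟨a, ha⟩, ⟨b, hb⟩, hmap, hiso⟩ := id hW
  obtain ⟨hmono', ⟨a', ha'⟩, ⟨b', hb'⟩, hmap', hiso'⟩ := id hW'
  set M : ℕ := (b - w).toNat + (b' - w).toNat + (w - a - 1).toNat + (w - a' - 1).toNat with hM
  set P : ℕ → Prop :=
    fun α => (∀ i : ℤ, w + α ≤ i → W i = W' i) ∧ (∀ i : ℤ, i ≤ w - α - 1 → W i = W' i) with hP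
  have base : P M := by
    constructor
    · intro i hi
      rw [hb i (by omega), hb' i (by omega)]
    · intro i hi
      rw [ha i (by omega), ha' i (by omega)]
  have step : ∀ α : ℕ, P (α + 1) → P α := by
    intro α ⟨ihU, ihL⟩
    constructor
    · intro i hi
      rcases eq_or_lt_of_le hi with heq | hlt
      · subst heq
        have hlow : W (w - α - 2) = W' (w - α - 2) := ihL _ (by push_cast; omega)
        ext v
        rw [wf_comap_char hW α v, wf_comap_char hW' α v, hlow]
      · exact ihU i (by push_cast; omega)
    · intro i hi
      rcases eq_or_lt_of_le hi with heq | hlt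
      · have hsup : ∀ (Z : ℤ → Submodule F V), IsWeightFiltration N w Z →
            Z (w - α - 1) = Z (w - α - 2) ⊔ (Z (w + α + 1)).map (N ^ (α + 1)) := by
          intro Z hZ
          obtain ⟨hZmono, -, -, hZmap, hZiso⟩ := hZ
          apply le_antisymm
          · have h1 := (hZiso ((α : ℤ) + 1) (by positivity)).1
            have htn : ((α : ℤ) + 1).toNat = α + 1 := by omega
            have e1 : w - ((α : ℤ) + 1) = w - α - 1 := by ring
            have e2 : w - ((α : ℤ) + 1) - 1 = w - α - 2 := by ring
            have e3 : w + ((α : ℤ) + 1) = w + α + 1 := by ring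
            rwa [htn, e2, e1, e3] at h1
          · apply sup_le
            · exact hZmono (by omega)
            · rintro x ⟨y, hy, rfl⟩
              have h2 := wf_pow_mem hZmap (α + 1) (w + α + 1) y hy
              have e : w + α + 1 - 2 * ((α : ℕ) + 1 : ℕ) = w - α - 1 := by push_cast; ring
              rwa [e] at h2
        have hup : W (w + α + 1) = W' (w + α + 1) := ihU _ (by push_cast; omega)
        have hlow : W (w - α - 2) = W' (w - α - 2) := ihL _ (by push_cast; omega)
        rw [heq, hsup W hW, hsup W' hW', hup, hlow]
      · exact ihL i (by push_cast; omega)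
  have all : ∀ j : ℕ, P (M - j) := by
    intro j
    induction j with
    | zero => simpa using base
    | succ j ih =>
      rcases Nat.lt_or_ge j M with h | h
      · have he : M - j = (M - (j + 1)) + 1 := by omega
        rw [he] at ih
        exact step _ ih
      · have he : M - (j + 1) = M - j := by omega
        rw [he]; exact ih
  have P0 : P 0 := by have := all M; simpa using this
  intro i
  rcases le_or_gt w i with h | h
  · exact P0.1 i (by push_cast; omega)
  · exact P0.2 i (by push_cast; omega)

end Aux

/-- Let `W` be the weight filtration centered at `w` associated to a nilpotent endomorphism
`N` of a finite dimensional vector space over a field of characteristic zero. If `S` is an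
automorphism of `V` commuting with `N`, then `N ∘ S` is nilpotent, the weight filtration
centered at `w` associated to `N ∘ S` coincides with `W`, and moreover `S (W i) = W i`
for all `i`. -/
theorem weightFiltration_comp_automorphism
    (F V : Type*) [Field F] [CharZero F] [AddCommGroup V] [Module F V]
    [FiniteDimensional F V]
    (N : V →ₗ[F] V) (hN : IsNilpotent N) (w : ℤ) (W : ℤ → Submodule F V)
    (hW : IsWeightFiltration N w W)
    (S : V →ₗ[F] V) (hS : Function.Bijective S) (hcomm : Commute N S) :
    IsNilpotent (N ∘ₗ S) ∧ IsWeightFiltration (N ∘ₗ S) w W ∧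
      ∀ i : ℤ, (W i).map S = W i := by
  obtain ⟨hmono, ⟨a, ha⟩, ⟨b, hb⟩, hmap, hiso⟩ := id hW
  -- pointwise commutation of `S` with powers of `N`
  have hcp : ∀ (k : ℕ) (v : V), S ((N ^ k) v) = (N ^ k) (S v) := by
    intro k v
    have h := (hcomm.symm.pow_right k)
    have := DFunLike.congr_fun h v
    simpa [Module.End.mul_apply] using this
  -- the filtration `i ↦ S (W i)` is also a weight filtration for `N`
  have hW' : IsWeightFiltration N w (fun i => (W i).map S) := by
    refine ⟨fun i j hij => Submodule.map_mono (hmono hij), ⟨a, ?_⟩, ⟨b, ?_⟩, ?_, ?_⟩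
    · intro i hi
      show Submodule.map S (W i) = ⊥
      rw [ha i hi, Submodule.map_bot]
    · intro i hi
      show Submodule.map S (W i) = ⊤
      rw [hb i hi, Submodule.map_top, LinearMap.range_eq_top.mpr hS.surjective]
    · intro i
      rintro x ⟨y, ⟨z, hz, rfl⟩, rfl⟩
      refine ⟨N z, hmap i ⟨z, hz, rfl⟩, ?_⟩
      simpa using hcp 1 z
    · intro α hα
      constructor
      · rintro x ⟨v, hv, rfl⟩
        have h1 := (hiso α hα).1 hv
        rw [Submodule.mem_sup] at h1
        obtain ⟨y, hy, z, hz, hyz⟩ := h1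
        obtain ⟨u, hu, rfl⟩ := hz
        rw [Submodule.mem_sup]
        refine ⟨S y, ⟨y, hy, rfl⟩, (N ^ α.toNat) (S u), ⟨S u, ⟨u, hu, rfl⟩, rfl⟩, ?_⟩
        rw [← hcp, ← map_add, hyz]
      · rintro x ⟨u, hu, rfl⟩ hNx
        have h2 : S ((N ^ α.toNat) u) ∈ (W (w - α - 1)).map S := by
          rwa [hcp]
        obtain ⟨y, hy, hyu⟩ := h2
        have : y = (N ^ α.toNat) u := hS.injective hyu
        subst this
        exact ⟨u, (hiso α hα).2 u hu hy, rfl⟩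
  -- hence `S (W i) = W i`
  have hfix : ∀ i : ℤ, (W i).map S = W i := fun i => (wf_unique hW' hW i)
  have hfixpow : ∀ (k : ℕ) (i : ℤ), (W i).map (S ^ k) = W i := by
    intro k
    induction k with
    | zero => intro i; simp [Module.End.one_eq_id, Submodule.map_id]
    | succ k ih =>
      intro i
      rw [pow_succ', Module.End.mul_eq_comp, Submodule.map_comp, ih, hfix]
  have hSkinj : ∀ k : ℕ, Function.Injective ⇑(S ^ k) := by
    intro k
    induction k with
    | zero => simpa [Module.End.one_eq_id] using Function.injective_id
    | succ k ih =>
      intro x y hxy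
      rw [pow_succ] at hxy
      simp only [Module.End.mul_apply] at hxy
      exact hS.injective (ih hxy)
  have hnil : IsNilpotent (N ∘ₗ S) := by
    obtain ⟨n, hn⟩ := hN
    refine ⟨n, ?_⟩
    have : N ∘ₗ S = N * S := (Module.End.mul_eq_comp N S).symm
    rw [this, hcomm.mul_pow, hn, zero_mul]
  -- `(N ∘ S)^k` and `N^k` have the same action on the filtration
  have hmappow : ∀ (k : ℕ) (i : ℤ), (W i).map ((N ∘ₗ S) ^ k) = (W i).map (N ^ k) := by
    intro k i
    have : N ∘ₗ S = N * S := (Module.End.mul_eq_comp N S).symm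
    rw [this, hcomm.mul_pow, Module.End.mul_eq_comp, Submodule.map_comp, hfixpow]
  have happly : ∀ (k : ℕ) (v : V), ((N ∘ₗ S) ^ k) v = (N ^ k) ((S ^ k) v) := by
    intro k v
    have h : (N ∘ₗ S) ^ k = N ^ k * S ^ k := by
      rw [show N ∘ₗ S = N * S from (Module.End.mul_eq_comp N S).symm, hcomm.mul_pow]
    rw [h, Module.End.mul_apply]
  refine ⟨hnil, ⟨hmono, ⟨a, ha⟩, ⟨b, hb⟩, ?_, ?_⟩, hfix⟩
  · intro i
    rw [Submodule.map_comp, hfix]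
    exact hmap i
  · intro α hα
    constructor
    · rw [hmappow]
      exact (hiso α hα).1
    · intro v hv hNv
      rw [happly] at hNv
      have hSv : (S ^ α.toNat) v ∈ W (w + α) := by
        rw [← hfixpow α.toNat (w + α)]
        exact ⟨v, hv, rfl⟩
      have h3 := (hiso α hα).2 _ hSv hNv
      rw [← hfixpow α.toNat (w + α - 1)] at h3
      obtain ⟨u, hu, huv⟩ := h3
      rwa [← hSkinj α.toNat huv]
end

section
/- Let F be a field of characteristic zero, V a finite-dimensional F-vector space, N a nilpotent endomorphism of V, and W the weight filtration centered at w ∈ ℤ associated to N. Then the weight filtration on the dual space V^∨ centered at −w associated to the nilpotent operator −N^∨ (minus the transpose of N) is the dual filtration W^∨, defined by (W^∨)_i = (W_{−i−1})^⊥, the annihilator of W_{−i−1} in V^∨. -/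
/-- Evaluation of a power of `-N.dualMap`. -/
lemma negDualMap_pow_apply {F V : Type*} [Field F] [AddCommGroup V] [Module F V]
    (N : V →ₗ[F] V) (k : ℕ) (φ : Module.Dual F V) (v : V) :
    (((-N.dualMap) ^ k) φ) v = (-1 : F) ^ k * φ ((N ^ k) v) := by
  induction k generalizing φ v with
  | zero => simp
  | succ k ih =>
    rw [pow_succ, Module.End.mul_apply, ih, pow_succ' N k, Module.End.mul_apply, pow_succ]
    simp only [LinearMap.neg_apply, LinearMap.dualMap_apply', LinearMap.coe_comp,
      Function.comp_apply]
    ring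

/-- Let `W` be the weight filtration centered at `w` associated to a nilpotent endomorphism
`N` of a finite dimensional vector space over a field of characteristic zero. Then the
weight filtration on the dual space `V^∨` centered at `-w` associated to `-N^∨` is the dual
filtration `(W^∨)_i = (W_{-i-1})^⊥` (the annihilator of `W_{-i-1}` in `V^∨`). -/
theorem weightFiltration_dual
    (F V : Type*) [Field F] [CharZero F] [AddCommGroup V] [Module F V]
    [FiniteDimensional F V]
    (N : V →ₗ[F] V) (hN : IsNilpotent N) (w : ℤ) (W : ℤ → Submodule F V)
    (hW : IsWeightFiltration N w W) :
    IsWeightFiltration (-N.dualMap) (-w)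
      (fun i : ℤ => (W (-i - 1)).dualAnnihilator) := by
  obtain ⟨hmono, ⟨a, ha⟩, ⟨b, hb⟩, hmap, hprim⟩ := hW
  -- powers of N shift the filtration
  have mapPow : ∀ (k : ℕ) (i : ℤ), (W i).map (N ^ k) ≤ W (i - 2 * k) := by
    intro k
    induction k with
    | zero =>
      intro i
      rw [pow_zero]
      rintro x ⟨y, hy, rfl⟩
      simpa using hy
    | succ k ih =>
      intro i
      calc (W i).map (N ^ (k + 1)) = ((W i).map (N ^ k)).map N := by
            rw [pow_succ' N k, Module.End.mul_eq_comp, Submodule.map_comp]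
        _ ≤ (W (i - 2 * k)).map N := Submodule.map_mono (ih i)
        _ ≤ W (i - 2 * k - 2) := hmap _
        _ = W (i - 2 * (k + 1)) := by congr 1; push_cast; ring
  refine ⟨?_, ⟨-b - 1, ?_⟩, ⟨-a - 1, ?_⟩, ?_, ?_⟩
  · -- monotone
    intro i j hij
    exact Submodule.dualAnnihilator_anti (hmono (by omega))
  · -- eventually ⊥
    intro i hi
    simp only
    rw [hb (-i - 1) (by omega), Submodule.dualAnnihilator_top]
  · -- eventually ⊤
    intro i hi
    simp only
    rw [ha (-i - 1) (by omega), Submodule.dualAnnihilator_bot]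
  · -- compatibility with -N.dualMap
    intro i
    rintro x ⟨φ, hφ, rfl⟩
    rw [Submodule.mem_dualAnnihilator]
    intro v hv
    have hNv : N v ∈ W (-i - 1) := by
      have h1 : N v ∈ W (-(i - 2) - 1 - 2) :=
        hmap _ (Submodule.mem_map_of_mem hv)
      have e : (-(i - 2) - 1 - 2 : ℤ) = -i - 1 := by ring
      rwa [e] at h1
    have hφ' : φ ∈ (W (-i - 1)).dualAnnihilator := hφ
    have h0 : φ (N v) = 0 := (Submodule.mem_dualAnnihilator φ).mp hφ' _ hNv
    simp [h0]
  · -- primitivity conditions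
    intro α hα
    have hk : ((α.toNat : ℤ)) = α := Int.toNat_of_nonneg hα.le
    set k := α.toNat with hkdef
    have e1 : (-(-w - α) - 1 : ℤ) = w + α - 1 := by ring
    have e2 : (-(-w - α - 1) - 1 : ℤ) = w + α := by ring
    have e3 : (-(-w + α) - 1 : ℤ) = w - α - 1 := by ring
    have e4 : (-(-w + α - 1) - 1 : ℤ) = w - α := by ring
    constructor
    · -- surjectivity part
      simp only [e1, e2, e3]
      intro φ hφ
      rw [Submodule.mem_dualAnnihilator] at hφ
      -- build χ with χ (N^k u) = φ u for u ∈ W (w+α), χ = 0 on W (w-α-1)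
      set A := W (w + α)
      set B := W (w - α - 1)
      set g : (A × B) →ₗ[F] V :=
        ((N ^ k) ∘ₗ A.subtype) ∘ₗ (LinearMap.fst F A B) +
          B.subtype ∘ₗ (LinearMap.snd F A B) with hg
      set h : (A × B) →ₗ[F] F := φ ∘ₗ A.subtype ∘ₗ (LinearMap.fst F A B) with hh
      have hker : LinearMap.ker g ≤ LinearMap.ker h := by
        intro p hp
        rw [LinearMap.mem_ker] at hp ⊢
        have hg0 : (N ^ k) (p.1 : V) + (p.2 : V) = 0 := hp
        have hNp : (N ^ k) (p.1 : V) ∈ B := by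
          have : (N ^ k) (p.1 : V) = -(p.2 : V) := eq_neg_of_add_eq_zero_left hg0
          rw [this]; exact B.neg_mem p.2.2
        have := (hprim α hα).2 (p.1 : V) p.1.2 hNp
        simpa [hh] using hφ _ this
      set q : ((A × B) ⧸ LinearMap.ker g) →ₗ[F] F := (LinearMap.ker g).liftQ h hker with hq
      set e : ((A × B) ⧸ LinearMap.ker g) ≃ₗ[F] LinearMap.range g := g.quotKerEquivRange
      obtain ⟨χ, hχ⟩ := LinearMap.exists_extend (q ∘ₗ (e.symm : LinearMap.range g →ₗ[F] _))
      have key : ∀ p : A × B, χ (g p) = φ (p.1 : V) := by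
        intro p
        have h1 : e (Submodule.Quotient.mk p) = ⟨g p, LinearMap.mem_range_self g p⟩ :=
          Subtype.ext (g.quotKerEquivRange_apply_mk p)
        have h2 : e.symm ⟨g p, LinearMap.mem_range_self g p⟩ = Submodule.Quotient.mk p := by
          rw [← h1, LinearEquiv.symm_apply_apply]
        have h3 := LinearMap.congr_fun hχ (⟨g p, LinearMap.mem_range_self g p⟩ :
          LinearMap.range g)
        simp only [LinearMap.coe_comp, Function.comp_apply, Submodule.coe_subtype,
          LinearEquiv.coe_coe, h2] at h3
        rw [hq, Submodule.liftQ_apply] at h3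
        rw [show χ (g p) = χ ((⟨g p, LinearMap.mem_range_self g p⟩ :
          LinearMap.range g) : V) from rfl]
        rw [h3]
        simp [hh]
      have hχB : χ ∈ B.dualAnnihilator := by
        rw [Submodule.mem_dualAnnihilator]
        intro v hv
        have := key (0, ⟨v, hv⟩)
        simpa [hg] using this
      -- decompose φ
      set χ' : Module.Dual F V := ((-1 : F) ^ k) • χ with hχ'
      have hχ'B : χ' ∈ B.dualAnnihilator := Submodule.smul_mem _ _ hχB
      set ξ : Module.Dual F V := ((-N.dualMap) ^ k) χ' with hξ
      have hξval : ∀ v : V, ξ v = χ ((N ^ k) v) := by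
        intro v
        rw [hξ, negDualMap_pow_apply, hχ']
        simp only [LinearMap.smul_apply, smul_eq_mul]
        rw [← mul_assoc, ← mul_pow]
        norm_num
      have hψA : φ - ξ ∈ A.dualAnnihilator := by
        rw [Submodule.mem_dualAnnihilator]
        intro u hu
        have h4 : ξ u = φ u := by
          rw [hξval]
          have := key (⟨u, hu⟩, 0)
          simpa [hg] using this
        simp [h4]
      refine Submodule.mem_sup.mpr ⟨φ - ξ, hψA, ξ, Submodule.mem_map_of_mem hχ'B, by abel⟩
    · -- injectivity part
      simp only [e2, e3, e4]
      intro φ hφ hNφ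
      rw [Submodule.mem_dualAnnihilator] at hφ hNφ ⊢
      intro v hv
      obtain ⟨x, hx, y, hy, hxy⟩ := Submodule.mem_sup.mp ((hprim α hα).1 hv)
      obtain ⟨u, hu, rfl⟩ := hy
      have h5 : ((-N.dualMap) ^ k) φ u = 0 := hNφ u hu
      rw [negDualMap_pow_apply] at h5
      have h6 : φ ((N ^ k) u) = 0 := by
        rcases mul_eq_zero.mp h5 with h | h
        · exact absurd h (pow_ne_zero _ (by norm_num))
        · exact h
      rw [← hxy, map_add, hφ x hx, h6, add_zero]
end
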